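/- arXiv:2207.08182 — 3 statements merged into one kernel-verified Lean document; each statement's English description precedes it below -/
import Mathlib

section
/- Suppose the vertices of a graph Γ are partitioned into nonempty sets J_1, …, J_d, and θ is a configuration such that (i) for each p, the restriction θ restricted to J_p is an equilibrium of the induced subgraph on J_p, and (ii) for any p ≠ q and any vertex j ∈ J_p, the configuration of θ restricted to N(j) ∩ J_q is balanced. Then for all α_1, …, α_d ∈ T, the configuration obtained by shifting all phases in J_p by α_p (for each p) is an equilibrium of Γ. -/
open Finset

/-- The unit complex number `e^{iθ}` associated to an angle `θ ∈ ℝ/2πℤ`. -/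
noncomputable def Real.Angle.toC (θ : Real.Angle) : ℂ :=
  (θ.cos : ℂ) + (θ.sin : ℂ) * Complex.I

/-- Shifting each part of a partition of the vertices by an arbitrary constant phase
gives an equilibrium, provided each part is internally at equilibrium and
each vertex sees a balanced configuration in every other part. -/
theorem partition_balanced_shift_equilibrium {V : Type*} [Fintype V] [DecidableEq V]
    {d : ℕ} (G : SimpleGraph V) [DecidableRel G.Adj]
    (part : V → Fin d) (hne : ∀ p : Fin d, ∃ v, part v = p)
    (θ : V → Real.Angle)
    (hequi : ∀ j, ∑ k ∈ (G.neighborFinset j).filter (fun k => part k = part j),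
        (θ k - θ j).sin = 0)
    (hbal : ∀ j, ∀ q : Fin d, q ≠ part j →
        ∑ k ∈ (G.neighborFinset j).filter (fun k => part k = q), (θ k).toC = 0)
    (α : Fin d → Real.Angle) :
    ∀ j, ∑ k ∈ G.neighborFinset j,
        ((θ k + α (part k)) - (θ j + α (part j))).sin = 0 := by
  intro j
  rw [← Finset.sum_fiberwise (G.neighborFinset j) part
    (fun k => ((θ k + α (part k)) - (θ j + α (part j))).sin)]
  refine Finset.sum_eq_zero fun q _ => ?_
  by_cases hq : q = part j
  · subst hq
    rw [← hequi j]
    refine Finset.sum_congr rfl fun k hk => ?_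
    rw [Finset.mem_filter] at hk
    rw [hk.2]
    congr 1
    abel
  · have hb := hbal j q hq
    have hcos : ∑ k ∈ (G.neighborFinset j).filter (fun k => part k = q),
        (θ k).cos = 0 := by
      have := congrArg Complex.re hb
      simpa [Real.Angle.toC, Complex.re_sum] using this
    have hsin : ∑ k ∈ (G.neighborFinset j).filter (fun k => part k = q),
        (θ k).sin = 0 := by
      have := congrArg Complex.im hb
      simpa [Real.Angle.toC, Complex.im_sum] using this
    have : ∀ k ∈ (G.neighborFinset j).filter (fun k => part k = q),
        ((θ k + α (part k)) - (θ j + α (part j))).sin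
          = (θ k).sin * (α q - (θ j + α (part j))).cos
            + (θ k).cos * (α q - (θ j + α (part j))).sin := by
      intro k hk
      rw [Finset.mem_filter] at hk
      rw [hk.2]
      rw [show (θ k + α q) - (θ j + α (part j)) = θ k + (α q - (θ j + α (part j))) by abel,
        Real.Angle.sin_add]
    rw [Finset.sum_congr rfl this, Finset.sum_add_distrib, ← Finset.sum_mul, ← Finset.sum_mul,
      hcos, hsin, zero_mul, zero_mul, add_zero]
end

section
/- Let Γ be the complete bipartite graph with parts J and K, and θ a configuration. If θ restricted to J is balanced and θ restricted to K is balanced, then θ is an equilibrium of the Kuramoto system on Γ. -/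
open Finset

lemma angle_sin_sub (a b : Real.Angle) :
    (a - b).sin = a.sin * b.cos - a.cos * b.sin := by
  rw [sub_eq_add_neg, Real.Angle.sin_add, Real.Angle.sin_neg, Real.Angle.cos_neg]; ring

lemma bal_parts {V : Type*} (S : Finset V) (θ : V → Real.Angle)
    (h : ∑ j ∈ S, (θ j).toC = 0) :
    (∑ j ∈ S, (θ j).cos = 0) ∧ (∑ j ∈ S, (θ j).sin = 0) := by
  constructor
  · have := congrArg Complex.re h
    simpa [Real.Angle.toC, Complex.re_sum] using this
  · have := congrArg Complex.im h
    simpa [Real.Angle.toC, Complex.im_sum] using this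

/-- On a complete bipartite graph with parts `J`, `K`, if both parts are
balanced then the configuration is an equilibrium of the Kuramoto system. -/
theorem bipartite_balanced_balanced_equilibrium {V : Type*} [Fintype V] [DecidableEq V]
    (J K : Finset V) (hJ : J.Nonempty) (hK : K.Nonempty)
    (hdisj : Disjoint J K) (hcover : J ∪ K = Finset.univ)
    (θ : V → Real.Angle)
    (hbalJ : ∑ j ∈ J, (θ j).toC = 0) (hbalK : ∑ k ∈ K, (θ k).toC = 0) :
    (∀ j ∈ J, ∑ k ∈ K, (θ k - θ j).sin = 0) ∧
    (∀ k ∈ K, ∑ j ∈ J, (θ j - θ k).sin = 0) := by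
  obtain ⟨hJc, hJs⟩ := bal_parts J θ hbalJ
  obtain ⟨hKc, hKs⟩ := bal_parts K θ hbalK
  constructor
  · intro j _
    simp only [angle_sin_sub, Finset.sum_sub_distrib, ← Finset.sum_mul]
    rw [hKc, hKs]; ring
  · intro k _
    simp only [angle_sin_sub, Finset.sum_sub_distrib, ← Finset.sum_mul]
    rw [hJc, hJs]; ring
end

section
/- On the eye graph G_2 (two disjoint 6-cycles, with four added edges joining the first and fourth vertex of the first cycle to the first and fourth vertex of the second cycle), for every α, β ∈ T the configuration assigning phases (2kπ/6 + α)_{k=1,…,6} to the first cycle and (2kπ/6 + β)_{k=1,…,6} to the second cycle is an equilibrium of the Kuramoto system. In particular the eye graph has a 2-dimensional torus of equilibria and infinitely many non-equivalent equilibria. -/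
open Finset

/-- The eye graph `G₂`: two disjoint 6-cycles (indexed by `Bool`), plus the four
edges joining the first and fourth vertex of one cycle to the first and fourth
vertex of the other cycle. -/
def eyeAdj (u v : Bool × ZMod 6) : Prop :=
  (u.1 = v.1 ∧ (v.2 = u.2 + 1 ∨ u.2 = v.2 + 1)) ∨
  (u.1 ≠ v.1 ∧ (u.2 = 1 ∨ u.2 = 4) ∧ (v.2 = 1 ∨ v.2 = 4))

instance : DecidableRel eyeAdj := fun u v => by unfold eyeAdj; infer_instance

/-- `θ` is an equilibrium of the Kuramoto system on the eye graph. -/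
def IsEyeEquilibrium (θ : Bool × ZMod 6 → Real.Angle) : Prop :=
  ∀ j, ∑ k ∈ Finset.univ.filter (fun k => eyeAdj j k), (θ k - θ j).sin = 0


noncomputable def eyeF (a b : ℝ) : Bool × ZMod 6 → Real.Angle := fun v =>
  ((2 * Real.pi * (v.2.val : ℝ) / 6 : ℝ) : Real.Angle) + (if v.1 then ((b:ℝ):Real.Angle) else ((a:ℝ):Real.Angle))

lemma case_f0 (a b : ℝ) :
    ∑ k ∈ Finset.univ.filter (fun k => eyeAdj (false, 0) k), (eyeF a b k - eyeF a b (false,0)).sin = 0 := by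
  rw [show (univ.filter fun k => eyeAdj (false, 0) k) = {(false,1),(false,5)} from by decide]
  rw [Finset.sum_insert (by decide), Finset.sum_singleton]
  simp only [eyeF, if_true, if_false, Bool.false_eq_true,
    show ((0:ZMod 6)).val = 0 from rfl, show ((1:ZMod 6)).val = 1 from rfl, show ((5:ZMod 6)).val = 5 from rfl,
    Nat.cast_zero, Nat.cast_one, Nat.cast_ofNat,
    ← Real.Angle.coe_add, ← Real.Angle.coe_sub, Real.Angle.sin_coe]
  rw [show (2 * Real.pi * 1 / 6 + a - (2 * Real.pi * 0 / 6 + a) : ℝ) = Real.pi/3 from by ring,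
      show (2 * Real.pi * 5 / 6 + a - (2 * Real.pi * 0 / 6 + a) : ℝ) = -(Real.pi/3) + 2*Real.pi from by ring]
  simp only [Real.sin_add_pi, Real.sin_add_two_pi, Real.sin_neg]
  ring

lemma case_f1 (a b : ℝ) :
    ∑ k ∈ Finset.univ.filter (fun k => eyeAdj (false, 1) k), (eyeF a b k - eyeF a b (false,1)).sin = 0 := by
  rw [show (univ.filter fun k => eyeAdj (false, 1) k) = {(false,2),(false,0),(true,1),(true,4)} from by decide]
  rw [Finset.sum_insert (by decide), Finset.sum_insert (by decide), Finset.sum_insert (by decide),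
    Finset.sum_singleton]
  simp only [eyeF, if_true, if_false, Bool.false_eq_true,
    show ((0:ZMod 6)).val = 0 from rfl, show ((1:ZMod 6)).val = 1 from rfl, show ((2:ZMod 6)).val = 2 from rfl, show ((4:ZMod 6)).val = 4 from rfl,
    Nat.cast_zero, Nat.cast_one, Nat.cast_ofNat,
    ← Real.Angle.coe_add, ← Real.Angle.coe_sub, Real.Angle.sin_coe]
  rw [show (2 * Real.pi * 2 / 6 + a - (2 * Real.pi * 1 / 6 + a) : ℝ) = Real.pi/3 from by ring,
      show (2 * Real.pi * 0 / 6 + a - (2 * Real.pi * 1 / 6 + a) : ℝ) = -(Real.pi/3) from by ring,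
      show (2 * Real.pi * 1 / 6 + b - (2 * Real.pi * 1 / 6 + a) : ℝ) = b - a from by ring,
      show (2 * Real.pi * 4 / 6 + b - (2 * Real.pi * 1 / 6 + a) : ℝ) = (b - a) + Real.pi from by ring]
  simp only [Real.sin_add_pi, Real.sin_add_two_pi, Real.sin_neg]
  ring

lemma case_f2 (a b : ℝ) :
    ∑ k ∈ Finset.univ.filter (fun k => eyeAdj (false, 2) k), (eyeF a b k - eyeF a b (false,2)).sin = 0 := by
  rw [show (univ.filter fun k => eyeAdj (false, 2) k) = {(false,3),(false,1)} from by decide]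
  rw [Finset.sum_insert (by decide), Finset.sum_singleton]
  simp only [eyeF, if_true, if_false, Bool.false_eq_true,
    show ((1:ZMod 6)).val = 1 from rfl, show ((2:ZMod 6)).val = 2 from rfl, show ((3:ZMod 6)).val = 3 from rfl,
    Nat.cast_zero, Nat.cast_one, Nat.cast_ofNat,
    ← Real.Angle.coe_add, ← Real.Angle.coe_sub, Real.Angle.sin_coe]
  rw [show (2 * Real.pi * 3 / 6 + a - (2 * Real.pi * 2 / 6 + a) : ℝ) = Real.pi/3 from by ring,
      show (2 * Real.pi * 1 / 6 + a - (2 * Real.pi * 2 / 6 + a) : ℝ) = -(Real.pi/3) from by ring]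
  simp only [Real.sin_add_pi, Real.sin_add_two_pi, Real.sin_neg]
  ring

lemma case_f3 (a b : ℝ) :
    ∑ k ∈ Finset.univ.filter (fun k => eyeAdj (false, 3) k), (eyeF a b k - eyeF a b (false,3)).sin = 0 := by
  rw [show (univ.filter fun k => eyeAdj (false, 3) k) = {(false,4),(false,2)} from by decide]
  rw [Finset.sum_insert (by decide), Finset.sum_singleton]
  simp only [eyeF, if_true, if_false, Bool.false_eq_true,
    show ((2:ZMod 6)).val = 2 from rfl, show ((3:ZMod 6)).val = 3 from rfl, show ((4:ZMod 6)).val = 4 from rfl,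
    Nat.cast_zero, Nat.cast_one, Nat.cast_ofNat,
    ← Real.Angle.coe_add, ← Real.Angle.coe_sub, Real.Angle.sin_coe]
  rw [show (2 * Real.pi * 4 / 6 + a - (2 * Real.pi * 3 / 6 + a) : ℝ) = Real.pi/3 from by ring,
      show (2 * Real.pi * 2 / 6 + a - (2 * Real.pi * 3 / 6 + a) : ℝ) = -(Real.pi/3) from by ring]
  simp only [Real.sin_add_pi, Real.sin_add_two_pi, Real.sin_neg]
  ring

lemma case_f4 (a b : ℝ) :
    ∑ k ∈ Finset.univ.filter (fun k => eyeAdj (false, 4) k), (eyeF a b k - eyeF a b (false,4)).sin = 0 := by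
  rw [show (univ.filter fun k => eyeAdj (false, 4) k) = {(false,5),(false,3),(true,1),(true,4)} from by decide]
  rw [Finset.sum_insert (by decide), Finset.sum_insert (by decide), Finset.sum_insert (by decide),
    Finset.sum_singleton]
  simp only [eyeF, if_true, if_false, Bool.false_eq_true,
    show ((0:ZMod 6)).val = 0 from rfl, show ((1:ZMod 6)).val = 1 from rfl, show ((2:ZMod 6)).val = 2 from rfl, show ((3:ZMod 6)).val = 3 from rfl, show ((4:ZMod 6)).val = 4 from rfl, show ((5:ZMod 6)).val = 5 from rfl,
    Nat.cast_zero, Nat.cast_one, Nat.cast_ofNat,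
    ← Real.Angle.coe_add, ← Real.Angle.coe_sub, Real.Angle.sin_coe]
  rw [show (2 * Real.pi * 5 / 6 + a - (2 * Real.pi * 4 / 6 + a) : ℝ) = Real.pi/3 from by ring,
      show (2 * Real.pi * 3 / 6 + a - (2 * Real.pi * 4 / 6 + a) : ℝ) = -(Real.pi/3) from by ring,
      show (2 * Real.pi * 1 / 6 + b - (2 * Real.pi * 4 / 6 + a) : ℝ) = -((a - b) + Real.pi) from by ring,
      show (2 * Real.pi * 4 / 6 + b - (2 * Real.pi * 4 / 6 + a) : ℝ) = -(a - b) from by ring]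
  simp only [Real.sin_add_pi, Real.sin_add_two_pi, Real.sin_neg]
  ring

lemma case_f5 (a b : ℝ) :
    ∑ k ∈ Finset.univ.filter (fun k => eyeAdj (false, 5) k), (eyeF a b k - eyeF a b (false,5)).sin = 0 := by
  rw [show (univ.filter fun k => eyeAdj (false, 5) k) = {(false,0),(false,4)} from by decide]
  rw [Finset.sum_insert (by decide), Finset.sum_singleton]
  simp only [eyeF, if_true, if_false, Bool.false_eq_true,
    show ((0:ZMod 6)).val = 0 from rfl, show ((4:ZMod 6)).val = 4 from rfl, show ((5:ZMod 6)).val = 5 from rfl,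
    Nat.cast_zero, Nat.cast_one, Nat.cast_ofNat,
    ← Real.Angle.coe_add, ← Real.Angle.coe_sub, Real.Angle.sin_coe]
  rw [show (2 * Real.pi * 0 / 6 + a - (2 * Real.pi * 5 / 6 + a) : ℝ) = -(-(Real.pi/3) + 2*Real.pi) from by ring,
      show (2 * Real.pi * 4 / 6 + a - (2 * Real.pi * 5 / 6 + a) : ℝ) = -(Real.pi/3) from by ring]
  simp only [Real.sin_add_pi, Real.sin_add_two_pi, Real.sin_neg]
  ring

lemma case_t0 (a b : ℝ) :
    ∑ k ∈ Finset.univ.filter (fun k => eyeAdj (true, 0) k), (eyeF a b k - eyeF a b (true,0)).sin = 0 := by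
  rw [show (univ.filter fun k => eyeAdj (true, 0) k) = {(true,1),(true,5)} from by decide]
  rw [Finset.sum_insert (by decide), Finset.sum_singleton]
  simp only [eyeF, if_true, if_false, Bool.false_eq_true,
    show ((0:ZMod 6)).val = 0 from rfl, show ((1:ZMod 6)).val = 1 from rfl, show ((5:ZMod 6)).val = 5 from rfl,
    Nat.cast_zero, Nat.cast_one, Nat.cast_ofNat,
    ← Real.Angle.coe_add, ← Real.Angle.coe_sub, Real.Angle.sin_coe]
  rw [show (2 * Real.pi * 1 / 6 + b - (2 * Real.pi * 0 / 6 + b) : ℝ) = Real.pi/3 from by ring,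
      show (2 * Real.pi * 5 / 6 + b - (2 * Real.pi * 0 / 6 + b) : ℝ) = -(Real.pi/3) + 2*Real.pi from by ring]
  simp only [Real.sin_add_pi, Real.sin_add_two_pi, Real.sin_neg]
  ring

lemma case_t1 (a b : ℝ) :
    ∑ k ∈ Finset.univ.filter (fun k => eyeAdj (true, 1) k), (eyeF a b k - eyeF a b (true,1)).sin = 0 := by
  rw [show (univ.filter fun k => eyeAdj (true, 1) k) = {(true,2),(true,0),(false,1),(false,4)} from by decide]
  rw [Finset.sum_insert (by decide), Finset.sum_insert (by decide), Finset.sum_insert (by decide),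
    Finset.sum_singleton]
  simp only [eyeF, if_true, if_false, Bool.false_eq_true,
    show ((0:ZMod 6)).val = 0 from rfl, show ((1:ZMod 6)).val = 1 from rfl, show ((2:ZMod 6)).val = 2 from rfl, show ((4:ZMod 6)).val = 4 from rfl,
    Nat.cast_zero, Nat.cast_one, Nat.cast_ofNat,
    ← Real.Angle.coe_add, ← Real.Angle.coe_sub, Real.Angle.sin_coe]
  rw [show (2 * Real.pi * 2 / 6 + b - (2 * Real.pi * 1 / 6 + b) : ℝ) = Real.pi/3 from by ring,
      show (2 * Real.pi * 0 / 6 + b - (2 * Real.pi * 1 / 6 + b) : ℝ) = -(Real.pi/3) from by ring,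
      show (2 * Real.pi * 1 / 6 + a - (2 * Real.pi * 1 / 6 + b) : ℝ) = a - b from by ring,
      show (2 * Real.pi * 4 / 6 + a - (2 * Real.pi * 1 / 6 + b) : ℝ) = (a - b) + Real.pi from by ring]
  simp only [Real.sin_add_pi, Real.sin_add_two_pi, Real.sin_neg]
  ring

lemma case_t2 (a b : ℝ) :
    ∑ k ∈ Finset.univ.filter (fun k => eyeAdj (true, 2) k), (eyeF a b k - eyeF a b (true,2)).sin = 0 := by
  rw [show (univ.filter fun k => eyeAdj (true, 2) k) = {(true,3),(true,1)} from by decide]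
  rw [Finset.sum_insert (by decide), Finset.sum_singleton]
  simp only [eyeF, if_true, if_false, Bool.false_eq_true,
    show ((1:ZMod 6)).val = 1 from rfl, show ((2:ZMod 6)).val = 2 from rfl, show ((3:ZMod 6)).val = 3 from rfl,
    Nat.cast_zero, Nat.cast_one, Nat.cast_ofNat,
    ← Real.Angle.coe_add, ← Real.Angle.coe_sub, Real.Angle.sin_coe]
  rw [show (2 * Real.pi * 3 / 6 + b - (2 * Real.pi * 2 / 6 + b) : ℝ) = Real.pi/3 from by ring,
      show (2 * Real.pi * 1 / 6 + b - (2 * Real.pi * 2 / 6 + b) : ℝ) = -(Real.pi/3) from by ring]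
  simp only [Real.sin_add_pi, Real.sin_add_two_pi, Real.sin_neg]
  ring

lemma case_t3 (a b : ℝ) :
    ∑ k ∈ Finset.univ.filter (fun k => eyeAdj (true, 3) k), (eyeF a b k - eyeF a b (true,3)).sin = 0 := by
  rw [show (univ.filter fun k => eyeAdj (true, 3) k) = {(true,4),(true,2)} from by decide]
  rw [Finset.sum_insert (by decide), Finset.sum_singleton]
  simp only [eyeF, if_true, if_false, Bool.false_eq_true,
    show ((2:ZMod 6)).val = 2 from rfl, show ((3:ZMod 6)).val = 3 from rfl, show ((4:ZMod 6)).val = 4 from rfl,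
    Nat.cast_zero, Nat.cast_one, Nat.cast_ofNat,
    ← Real.Angle.coe_add, ← Real.Angle.coe_sub, Real.Angle.sin_coe]
  rw [show (2 * Real.pi * 4 / 6 + b - (2 * Real.pi * 3 / 6 + b) : ℝ) = Real.pi/3 from by ring,
      show (2 * Real.pi * 2 / 6 + b - (2 * Real.pi * 3 / 6 + b) : ℝ) = -(Real.pi/3) from by ring]
  simp only [Real.sin_add_pi, Real.sin_add_two_pi, Real.sin_neg]
  ring

lemma case_t4 (a b : ℝ) :
    ∑ k ∈ Finset.univ.filter (fun k => eyeAdj (true, 4) k), (eyeF a b k - eyeF a b (true,4)).sin = 0 := by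
  rw [show (univ.filter fun k => eyeAdj (true, 4) k) = {(true,5),(true,3),(false,1),(false,4)} from by decide]
  rw [Finset.sum_insert (by decide), Finset.sum_insert (by decide), Finset.sum_insert (by decide),
    Finset.sum_singleton]
  simp only [eyeF, if_true, if_false, Bool.false_eq_true,
    show ((0:ZMod 6)).val = 0 from rfl, show ((1:ZMod 6)).val = 1 from rfl, show ((2:ZMod 6)).val = 2 from rfl, show ((3:ZMod 6)).val = 3 from rfl, show ((4:ZMod 6)).val = 4 from rfl, show ((5:ZMod 6)).val = 5 from rfl,
    Nat.cast_zero, Nat.cast_one, Nat.cast_ofNat,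
    ← Real.Angle.coe_add, ← Real.Angle.coe_sub, Real.Angle.sin_coe]
  rw [show (2 * Real.pi * 5 / 6 + b - (2 * Real.pi * 4 / 6 + b) : ℝ) = Real.pi/3 from by ring,
      show (2 * Real.pi * 3 / 6 + b - (2 * Real.pi * 4 / 6 + b) : ℝ) = -(Real.pi/3) from by ring,
      show (2 * Real.pi * 1 / 6 + a - (2 * Real.pi * 4 / 6 + b) : ℝ) = -((b - a) + Real.pi) from by ring,
      show (2 * Real.pi * 4 / 6 + a - (2 * Real.pi * 4 / 6 + b) : ℝ) = -(b - a) from by ring]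
  simp only [Real.sin_add_pi, Real.sin_add_two_pi, Real.sin_neg]
  ring

lemma case_t5 (a b : ℝ) :
    ∑ k ∈ Finset.univ.filter (fun k => eyeAdj (true, 5) k), (eyeF a b k - eyeF a b (true,5)).sin = 0 := by
  rw [show (univ.filter fun k => eyeAdj (true, 5) k) = {(true,0),(true,4)} from by decide]
  rw [Finset.sum_insert (by decide), Finset.sum_singleton]
  simp only [eyeF, if_true, if_false, Bool.false_eq_true,
    show ((0:ZMod 6)).val = 0 from rfl, show ((4:ZMod 6)).val = 4 from rfl, show ((5:ZMod 6)).val = 5 from rfl,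
    Nat.cast_zero, Nat.cast_one, Nat.cast_ofNat,
    ← Real.Angle.coe_add, ← Real.Angle.coe_sub, Real.Angle.sin_coe]
  rw [show (2 * Real.pi * 0 / 6 + b - (2 * Real.pi * 5 / 6 + b) : ℝ) = -(-(Real.pi/3) + 2*Real.pi) from by ring,
      show (2 * Real.pi * 4 / 6 + b - (2 * Real.pi * 5 / 6 + b) : ℝ) = -(Real.pi/3) from by ring]
  simp only [Real.sin_add_pi, Real.sin_add_two_pi, Real.sin_neg]
  ring


lemma eye_equil (α β : Real.Angle) : IsEyeEquilibrium (fun v =>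
    ((2 * Real.pi * (v.2.val : ℝ) / 6 : ℝ) : Real.Angle) + (if v.1 then β else α)) := by
  induction α using Real.Angle.induction_on with | h a =>
  induction β using Real.Angle.induction_on with | h b =>
  intro j
  obtain ⟨u, n⟩ := j
  fin_cases u <;> fin_cases n
  · exact case_t0 a b
  · exact case_t1 a b
  · exact case_t2 a b
  · exact case_t3 a b
  · exact case_t4 a b
  · exact case_t5 a b
  · exact case_f0 a b
  · exact case_f1 a b
  · exact case_f2 a b
  · exact case_f3 a b
  · exact case_f4 a b
  · exact case_f5 a b

/-- On the eye graph, shifting the two splay 6-cycles independently by `α` and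
`β` always yields an equilibrium; hence there is a 2-torus of equilibria and
infinitely many pairwise non-equivalent equilibria. -/
theorem eye_graph_torus_of_equilibria :
    (∀ α β : Real.Angle, IsEyeEquilibrium (fun v =>
      ((2 * Real.pi * (v.2.val : ℝ) / 6 : ℝ) : Real.Angle) + (if v.1 then β else α))) ∧
    (∃ S : Set (Bool × ZMod 6 → Real.Angle), S.Infinite ∧
      (∀ θ ∈ S, IsEyeEquilibrium θ) ∧
      (∀ θ₁ ∈ S, ∀ θ₂ ∈ S, θ₁ ≠ θ₂ →
        ¬ ∃ c : Real.Angle, ∀ v, θ₁ v = θ₂ v + c)) := by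
  refine ⟨eye_equil, ?_⟩
  set f : Real.Angle → (Bool × ZMod 6 → Real.Angle) := fun α v =>
    ((2 * Real.pi * (v.2.val : ℝ) / 6 : ℝ) : Real.Angle) + (if v.1 then (0:Real.Angle) else α) with hf
  refine ⟨Set.range f, ?_, ?_, ?_⟩
  · have hsub : (fun x : ℝ => f ↑x) '' (Set.Ico 0 1) ⊆ Set.range f := by
      rintro _ ⟨x, -, rfl⟩; exact ⟨↑x, rfl⟩
    refine Set.Infinite.mono hsub (Set.Infinite.image ?_ (Set.Ico_infinite one_pos))
    intro x hx y hy hxy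
    have h1 : f ↑x (false, 0) = f ↑y (false, 0) := congrFun hxy (false, 0)
    simp only [hf, if_false, Bool.false_eq_true] at h1
    have h2 : ((x : ℝ) : Real.Angle) = ((y : ℝ) : Real.Angle) := add_left_cancel h1
    rw [Real.Angle.angle_eq_iff_two_pi_dvd_sub] at h2
    obtain ⟨k, hk⟩ := h2
    have hπ := Real.pi_gt_three
    have hx0 := hx.1; have hx1 := hx.2; have hy0 := hy.1; have hy1 := hy.2
    have hk0 : k = 0 := by
      rcases lt_trichotomy k 0 with h | h | h
      · have hle : (k : ℝ) ≤ -1 := by exact_mod_cast Int.le_sub_one_of_lt h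
        nlinarith
      · exact h
      · have hle : (1 : ℝ) ≤ (k : ℝ) := by exact_mod_cast h
        nlinarith
    rw [hk0] at hk
    simp at hk
    linarith [hk]
  · rintro θ ⟨α, rfl⟩
    exact eye_equil α 0
  · rintro _ ⟨α₁, rfl⟩ _ ⟨α₂, rfl⟩ hne ⟨c, hc⟩
    have h1 := hc (true, 0)
    simp only [hf, if_true] at h1
    have hc0 : c = 0 := by
      simpa [add_eq_left] using h1.symm
    have h2 := hc (false, 0)
    simp only [hf, if_false, Bool.false_eq_true, hc0, add_zero] at h2
    have hα : α₁ = α₂ := add_left_cancel h2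
    exact hne (by rw [hα])
end
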